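/- Let $(w_n)_{n\ge1}$ be a strictly increasing sequence in $(0,1)$ with $w_n\to1$, and let $(\rho_n)_{n\ge1}$ be a sequence of positive real numbers such that $\sum_{k>n}\frac{1-w_k}{1-w_{k+1}}\rho_k = o(\rho_n)$ as $n\to\infty$ (in particular these tail sums are finite). Then there exists a holomorphic function $\phi$ on the open unit disk $\mathbb{D}=\{z\in\mathbb{C}:|z|<1\}$ such that $|\phi(z)|\ge1$ for all $z\in\mathbb{D}$ and, for every $n\ge1$, $\inf_{r\in[w_n,w_{n+1}]}\log\left|\frac{\phi(r w_n)}{\phi(w_n)}\right| \ge \frac{\rho_n}{1-w_n}$. -/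

import Mathlib

open Filter

namespace RadialGrowthAux

noncomputable def auxF (w c : ℕ → ℝ) (k : ℕ) (z : ℂ) : ℂ :=
  (c k : ℂ) * (((1 - w k : ℝ) : ℂ)⁻¹ - (2 - (w k : ℂ) - z)⁻¹)

noncomputable def auxfr (w c : ℕ → ℝ) (k : ℕ) (x : ℝ) : ℝ :=
  c k * ((1 - w k)⁻¹ - (2 - w k - x)⁻¹)

variable {w c : ℕ → ℝ}

lemma aux_re_pos {k : ℕ} (hk : w k < 1) {z : ℂ} (hz : z.re < 1) :
    0 < (2 - (w k : ℂ) - z).re := by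
  simp only [Complex.sub_re, Complex.ofReal_re]
  have : ((2 : ℂ)).re = 2 := by simp
  simp [this]
  linarith

lemma aux_re_ge {k : ℕ} {z : ℂ} (hz : z.re ≤ 1) :
    1 - w k ≤ (2 - (w k : ℂ) - z).re := by
  simp only [Complex.sub_re, Complex.ofReal_re]
  have : ((2 : ℂ)).re = 2 := by simp
  simp [this]
  linarith

lemma aux_ne {k : ℕ} (hk : w k < 1) {z : ℂ} (hz : z.re < 1) :
    2 - (w k : ℂ) - z ≠ 0 := by
  intro h
  have := aux_re_pos hk hz
  rw [h] at this
  simp at this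

lemma auxF_real (k : ℕ) (x : ℝ) : auxF w c k ↑x = ((auxfr w c k x : ℝ) : ℂ) := by
  unfold auxF auxfr
  push_cast
  ring

lemma auxF_norm_le {k : ℕ} (hk0 : 0 < w k) (hk : w k < 1) (hck : 0 ≤ c k)
    {R : ℝ} (hR : R < 1) {z : ℂ} (hz : ‖z‖ ≤ R) :
    ‖auxF w c k z‖ ≤ 2 * (c k / (1 - w k)) / (1 - R) := by
  have hzre : z.re < 1 := lt_of_le_of_lt ((Complex.re_le_norm z).trans hz) hR
  have hδ : (0:ℝ) < 1 - w k := by linarith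
  have hδc : ((1 - w k : ℝ) : ℂ) ≠ 0 := by
    exact_mod_cast hδ.ne'
  have hne : 2 - (w k : ℂ) - z ≠ 0 := aux_ne hk hzre
  have heq : ((1 - w k : ℝ) : ℂ)⁻¹ - (2 - (w k : ℂ) - z)⁻¹
      = (1 - z) / (((1 - w k : ℝ) : ℂ) * (2 - (w k : ℂ) - z)) := by
    rw [inv_sub_inv hδc hne]
    congr 1
    push_cast
    ring
  have hnorm_den : (1 - w k) * (1 - R) ≤ ‖((1 - w k : ℝ) : ℂ) * (2 - (w k : ℂ) - z)‖ := by
    rw [norm_mul]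
    have h1 : ‖((1 - w k : ℝ) : ℂ)‖ = 1 - w k := by
      rw [Complex.norm_real, Real.norm_eq_abs, abs_of_pos hδ]
    rw [h1]
    have h2 : 1 - R ≤ ‖2 - (w k : ℂ) - z‖ := by
      have := Complex.re_le_norm (2 - (w k : ℂ) - z)
      have hre : 1 - R ≤ (2 - (w k : ℂ) - z).re := by
        have := (Complex.re_le_norm z).trans hz
        simp only [Complex.sub_re, Complex.ofReal_re]
        have h2' : ((2 : ℂ)).re = 2 := by simp
        simp [h2']
        linarith
      calc 1 - R ≤ (2 - (w k : ℂ) - z).re := hre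
        _ ≤ ‖2 - (w k : ℂ) - z‖ := Complex.re_le_norm _
        _ = ‖2 - (w k : ℂ) - z‖ := rfl
    exact mul_le_mul_of_nonneg_left h2 hδ.le
  have hnum : ‖(1 : ℂ) - z‖ ≤ 2 := by
    calc ‖(1:ℂ) - z‖ ≤ ‖(1:ℂ)‖ + ‖z‖ := norm_sub_le _ _
      _ ≤ 1 + R := by rw [norm_one]; linarith
      _ ≤ 2 := by linarith
  have hRpos : (0:ℝ) < 1 - R := by linarith
  have hdenpos : (0:ℝ) < (1 - w k) * (1 - R) := mul_pos hδ hRpos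
  unfold auxF
  rw [heq, norm_mul, norm_div]
  have hc : ‖((c k : ℝ) : ℂ)‖ = c k := by
    rw [Complex.norm_real, Real.norm_eq_abs, abs_of_nonneg hck]
  rw [hc]
  calc c k * (‖(1:ℂ) - z‖ / ‖((1 - w k : ℝ) : ℂ) * (2 - (w k : ℂ) - z)‖)
      ≤ c k * (2 / ((1 - w k) * (1 - R))) := by
        apply mul_le_mul_of_nonneg_left _ hck
        exact div_le_div₀ (by norm_num) hnum hdenpos hnorm_den
    _ = 2 * (c k / (1 - w k)) / (1 - R) := by
        field_simp
  done

lemma auxF_diffOn {k : ℕ} (hk : w k < 1) :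
    DifferentiableOn ℂ (auxF w c k) (Metric.ball (0:ℂ) 1) := by
  unfold auxF
  apply DifferentiableOn.const_mul
  apply DifferentiableOn.sub (differentiableOn_const _)
  apply DifferentiableOn.inv
  · exact (differentiableOn_const _).sub differentiableOn_id
  · intro z hz
    rw [Metric.mem_ball, dist_zero_right] at hz
    exact aux_ne hk (lt_of_le_of_lt (Complex.re_le_norm z) hz)

lemma auxF_re_nonneg {k : ℕ} (hk : w k < 1) (hck : 0 ≤ c k) {z : ℂ} (hz : z.re < 1) :
    0 ≤ (auxF w c k z).re := by
  have hδ : (0:ℝ) < 1 - w k := by linarith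
  have hre : (auxF w c k z).re
      = c k * ((1 - w k)⁻¹ - ((2 - (w k : ℂ) - z)⁻¹).re) := by
    unfold auxF
    rw [Complex.re_ofReal_mul, Complex.sub_re, ← Complex.ofReal_inv, Complex.ofReal_re]
  rw [hre]
  apply mul_nonneg hck
  rw [sub_nonneg]
  have hdpos : 0 < (2 - (w k : ℂ) - z).re := aux_re_pos hk hz
  have hdge : 1 - w k ≤ (2 - (w k : ℂ) - z).re := aux_re_ge hz.le
  calc ((2 - (w k : ℂ) - z)⁻¹).re
      = (2 - (w k : ℂ) - z).re / Complex.normSq (2 - (w k : ℂ) - z) := Complex.inv_re _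
    _ ≤ (2 - (w k : ℂ) - z).re / ((2 - (w k : ℂ) - z).re * (2 - (w k : ℂ) - z).re) := by
        apply div_le_div_of_nonneg_left hdpos.le (mul_pos hdpos hdpos)
        rw [Complex.normSq_apply]
        nlinarith [sq_nonneg (2 - (w k : ℂ) - z).im]
    _ = ((2 - (w k : ℂ) - z).re)⁻¹ := by
        rw [div_mul_eq_div_div, div_self hdpos.ne', one_div]
    _ ≤ (1 - w k)⁻¹ := inv_anti₀ hδ hdge

lemma auxfr_nonneg {k : ℕ} (hk : w k < 1) (hck : 0 ≤ c k) {x : ℝ} (hx : x < 1) :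
    0 ≤ auxfr w c k x := by
  have hδ : (0:ℝ) < 1 - w k := by linarith
  unfold auxfr
  apply mul_nonneg hck
  rw [sub_nonneg]
  exact inv_anti₀ hδ (by linarith)

lemma auxfr_le {k : ℕ} (hk : w k < 1) (hck : 0 ≤ c k) {x : ℝ} (hx0 : 0 ≤ x) (hx : x < 1) :
    auxfr w c k x ≤ c k / (1 - w k) := by
  have hδ : (0:ℝ) < 1 - w k := by linarith
  have hd : (0:ℝ) < 2 - w k - x := by linarith
  unfold auxfr
  calc c k * ((1 - w k)⁻¹ - (2 - w k - x)⁻¹) ≤ c k * (1 - w k)⁻¹ := by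
        apply mul_le_mul_of_nonneg_left _ hck
        have : 0 < (2 - w k - x)⁻¹ := inv_pos.mpr hd
        linarith
    _ = c k / (1 - w k) := (div_eq_mul_inv _ _).symm

lemma auxfr_sub (k : ℕ) (a b : ℝ) :
    auxfr w c k a - auxfr w c k b = c k * ((2 - w k - b)⁻¹ - (2 - w k - a)⁻¹) := by
  unfold auxfr; ring

lemma auxfr_sub_nonneg {k : ℕ} (hk : w k < 1) (hck : 0 ≤ c k) {a b : ℝ}
    (hab : a ≤ b) (hb : b < 1) :
    0 ≤ auxfr w c k a - auxfr w c k b := by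
  rw [auxfr_sub]
  apply mul_nonneg hck
  rw [sub_nonneg]
  exact inv_anti₀ (by linarith) (by linarith)

end RadialGrowthAux

open RadialGrowthAux

/-- Lemma 3.3 (without outerness): given a strictly increasing sequence `w n ∈ (0,1)`
tending to `1` and positive `ρ n` with `∑_{k>n} ((1-w_k)/(1-w_{k+1})) ρ_k = o(ρ_n)`,
there is a holomorphic function `φ` on the unit disk with `|φ| ≥ 1` and
`log |φ(r wₙ)/φ(wₙ)| ≥ ρₙ/(1-wₙ)` for all `n ≥ 1` and all `r ∈ [wₙ, wₙ₊₁]`. -/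
theorem exists_holomorphic_with_radial_growth
    (w ρ : ℕ → ℝ) (hw_mono : StrictMono w) (hw_mem : ∀ n, w n ∈ Set.Ioo (0 : ℝ) 1)
    (hw_lim : Tendsto w atTop (nhds 1))
    (hρ : ∀ n, 0 < ρ n)
    (hsum : Summable (fun k : ℕ => (1 - w k) / (1 - w (k + 1)) * ρ k))
    (hlittleo : Tendsto
      (fun n : ℕ => (∑' k : ℕ, (1 - w (n + 1 + k)) / (1 - w (n + 1 + k + 1)) * ρ (n + 1 + k)) / ρ n)
      atTop (nhds 0)) :
    ∃ φ : ℂ → ℂ, DifferentiableOn ℂ φ (Metric.ball (0 : ℂ) 1) ∧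
      (∀ z ∈ Metric.ball (0 : ℂ) 1, 1 ≤ ‖φ z‖) ∧
      ∀ n : ℕ, 1 ≤ n → ∀ r ∈ Set.Icc (w n) (w (n + 1)),
        ρ n / (1 - w n) ≤ Real.log (‖φ (↑(r * w n)) / φ (↑(w n))‖) := by
  have hw0 : ∀ k, 0 < w k := fun k => (hw_mem k).1
  have hw1 : ∀ k, w k < 1 := fun k => (hw_mem k).2
  have hδ : ∀ k, (0:ℝ) < 1 - w k := fun k => by linarith [hw1 k]
  have hW : 0 < w 1 := hw0 1
  set c : ℕ → ℝ := fun k => 6 * ρ k * (1 - w k) / (w 1 * (1 - w (k + 1))) with hc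
  have hcpos : ∀ k, 0 < c k := by
    intro k
    rw [hc]
    exact div_pos (by nlinarith [hρ k, hδ k]) (mul_pos hW (hδ (k+1)))
  -- shifted summability of the tail terms
  have hshift : ∀ n : ℕ, Summable
      (fun k : ℕ => (1 - w (n + 1 + k)) / (1 - w (n + 1 + k + 1)) * ρ (n + 1 + k)) := by
    intro n
    have h := (summable_nat_add_iff
      (f := fun k : ℕ => (1 - w k) / (1 - w (k + 1)) * ρ k) (n + 1)).mpr hsum
    exact h.congr fun b => by rw [Nat.add_comm b (n+1)]
  have hterm_nonneg : ∀ j : ℕ, 0 ≤ (1 - w j) / (1 - w (j + 1)) * ρ j := fun j =>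
    mul_nonneg (div_nonneg (hδ j).le (hδ (j+1)).le) (hρ j).le
  -- eventual ratio bound for s k = ρ k / (1 - w (k+1))
  have hev : ∀ᶠ n : ℕ in atTop,
      ρ (n+1) / (1 - w (n+1+1)) ≤ 1/2 * (ρ n / (1 - w (n+1))) := by
    have h2 := hlittleo.eventually_lt_const (show (0:ℝ) < 1/2 by norm_num)
    filter_upwards [h2] with n hn
    have hT : (∑' k : ℕ, (1 - w (n + 1 + k)) / (1 - w (n + 1 + k + 1)) * ρ (n + 1 + k))
        ≤ ρ n / 2 := by
      have := (div_lt_iff₀ (hρ n)).mp hn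
      linarith
    have hfirst : (1 - w (n+1)) / (1 - w (n+1+1)) * ρ (n+1)
        ≤ (∑' k : ℕ, (1 - w (n + 1 + k)) / (1 - w (n + 1 + k + 1)) * ρ (n + 1 + k)) := by
      have h0 := Summable.le_tsum (hshift n) 0 (fun j _ => hterm_nonneg _)
      simpa using h0
    have hkey : (1 - w (n+1)) / (1 - w (n+1+1)) * ρ (n+1) ≤ ρ n / 2 := hfirst.trans hT
    have hA := hδ (n+1); have hB := hδ (n+1+1)
    rw [div_mul_eq_mul_div, div_le_iff₀ hB] at hkey
    have heq : 1/2 * (ρ n / (1 - w (n+1))) = ρ n / 2 / (1 - w (n+1)) := by ring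
    rw [heq, div_le_div_iff₀ hB hA]
    nlinarith [hkey]
  have hs_summ : Summable (fun k : ℕ => ρ k / (1 - w (k + 1))) := by
    apply summable_of_ratio_norm_eventually_le (r := 1/2) (by norm_num)
    filter_upwards [hev] with n hn
    have p1 : 0 < ρ (n+1) / (1 - w (n+1+1)) := div_pos (hρ _) (hδ _)
    have p2 : 0 < ρ n / (1 - w (n+1)) := div_pos (hρ _) (hδ _)
    rw [Real.norm_eq_abs, Real.norm_eq_abs, abs_of_pos p1, abs_of_pos p2]
    exact hn
  have hS : Summable (fun k : ℕ => c k / (1 - w k)) := by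
    have h := hs_summ.mul_left (6 / w 1)
    refine h.congr fun k => ?_
    rw [hc]
    field_simp [(hδ k).ne', (hδ (k+1)).ne', hW.ne']
  -- summability of F at points of the ball
  have hFsum : ∀ z : ℂ, ‖z‖ < 1 → Summable (fun k => auxF w c k z) := by
    intro z hz
    apply Summable.of_norm_bounded (g := fun k => 2 * (c k / (1 - w k)) / (1 - ‖z‖))
      ((hS.mul_left 2).div_const _)
    intro k
    exact auxF_norm_le (hw0 k) (hw1 k) (hcpos k).le hz le_rfl
  refine ⟨fun z => Complex.exp (∑' k, auxF w c k z), ?_, ?_, ?_⟩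
  · -- differentiability
    apply DifferentiableOn.cexp
    intro z hz
    rw [Metric.mem_ball, dist_zero_right] at hz
    have hR1 : (1 + ‖z‖)/2 < 1 := by linarith
    have hzR : ‖z‖ < (1 + ‖z‖)/2 := by linarith
    have hsub : DifferentiableOn ℂ (fun ζ => ∑' k, auxF w c k ζ)
        (Metric.ball (0:ℂ) ((1 + ‖z‖)/2)) := by
      apply Complex.differentiableOn_tsum_of_summable_norm
        ((hS.mul_left 2).div_const (1 - (1 + ‖z‖)/2))
      · intro k
        exact (auxF_diffOn (hw1 k)).mono (Metric.ball_subset_ball hR1.le)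
      · exact Metric.isOpen_ball
      · intro k ζ hζ
        rw [Metric.mem_ball, dist_zero_right] at hζ
        exact auxF_norm_le (hw0 k) (hw1 k) (hcpos k).le hR1 hζ.le
    exact (hsub.differentiableAt (Metric.isOpen_ball.mem_nhds
      (by rw [Metric.mem_ball, dist_zero_right]; exact hzR))).differentiableWithinAt
  · -- modulus at least 1
    intro z hz
    rw [Metric.mem_ball, dist_zero_right] at hz
    rw [Complex.norm_exp]
    apply Real.one_le_exp
    rw [Complex.re_tsum (hFsum z hz)]
    apply tsum_nonneg
    intro k
    exact auxF_re_nonneg (hw1 k) (hcpos k).le (lt_of_le_of_lt (Complex.re_le_norm z) hz)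
  · -- the radial growth estimate
    intro n hn r hr
    obtain ⟨hr1, hr2⟩ := hr
    have hr0 : 0 < r := lt_of_lt_of_le (hw0 n) hr1
    have hrlt : r < 1 := lt_of_le_of_lt hr2 (hw1 (n+1))
    have ha0 : 0 < r * w n := mul_pos hr0 (hw0 n)
    have hab : r * w n < w n := by nlinarith [hw0 n]
    have ha1 : r * w n < 1 := hab.trans (hw1 n)
    have hfra : Summable (fun k => auxfr w c k (r * w n)) := by
      apply Summable.of_nonneg_of_le
        (fun k => auxfr_nonneg (hw1 k) (hcpos k).le ha1)
        (fun k => auxfr_le (hw1 k) (hcpos k).le ha0.le ha1) hS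
    have hfrb : Summable (fun k => auxfr w c k (w n)) := by
      apply Summable.of_nonneg_of_le
        (fun k => auxfr_nonneg (hw1 k) (hcpos k).le (hw1 n))
        (fun k => auxfr_le (hw1 k) (hcpos k).le (hw0 n).le (hw1 n)) hS
    have hg_real : ∀ x : ℝ, (∑' k, auxF w c k (↑x : ℂ)) = ((∑' k, auxfr w c k x : ℝ) : ℂ) := by
      intro x
      rw [Complex.ofReal_tsum]
      exact tsum_congr fun k => auxF_real k x
    rw [← Complex.exp_sub, Complex.norm_exp, Real.log_exp, Complex.sub_re,
      hg_real (r * w n), hg_real (w n), Complex.ofReal_re, Complex.ofReal_re,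
      ← Summable.tsum_sub hfra hfrb]
    have hmain : ρ n / (1 - w n) ≤ auxfr w c n (r * w n) - auxfr w c n (w n) := by
      rw [auxfr_sub]
      have hδn := hδ n; have hδn1 := hδ (n+1)
      have hP : 2 - w n - w n = 2 * (1 - w n) := by ring
      have hQpos : (0:ℝ) < 2 - w n - r * w n := by nlinarith
      have hQ3 : 2 - w n - r * w n ≤ 3 * (1 - w n) := by nlinarith [sq_nonneg (1 - w n)]
      have hPpos : (0:ℝ) < 2 - w n - w n := by nlinarith
      have hinv : (2 - w n - w n)⁻¹ - (2 - w n - r * w n)⁻¹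
          = (w n - r * w n) / ((2 - w n - w n) * (2 - w n - r * w n)) := by
        rw [inv_sub_inv hPpos.ne' hQpos.ne']
        congr 1
        ring
      rw [hinv, hc]
      have hw1n : w 1 ≤ w n := hw_mono.monotone hn
      have hD : w 1 * (1 - w (n+1)) ≤ w n - r * w n := by nlinarith
      rw [div_mul_div_comm]
      rw [div_le_div_iff₀ hδn (mul_pos (mul_pos hW hδn1)
        (mul_pos hPpos hQpos))]
      rw [hP]
      have h1 : (2 - w n - r * w n) * (w 1 * (1 - w (n+1)))
          ≤ (3 * (1 - w n)) * (w n - r * w n) :=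
        mul_le_mul hQ3 hD (mul_nonneg hW.le hδn1.le) (by linarith)
      nlinarith [mul_le_mul_of_nonneg_left h1
        (mul_nonneg (mul_nonneg (by norm_num : (0:ℝ) ≤ 2) (hρ n).le) hδn.le)]
    refine hmain.trans (Summable.le_tsum (hfra.sub hfrb) n ?_)
    intro j _
    exact auxfr_sub_nonneg (hw1 j) (hcpos j).le hab.le (hw1 n)
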